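/- Let q ∈ ℂ with |q| < 1/2 and let φ(t) = 1 + q e^{2πit} + conj(q) e^{−2πit} = 1 + 2 Re(q e^{2πit}) for t ∈ [0,1] (which is strictly positive). Then for every z in the open unit disc, exp((1/2)∫₀¹ ((e^{2πit}+z)/(e^{2πit}−z)) log φ(t) dt) = c₀ + (q/c₀) z, where c₀ = sqrt((1 + sqrt(1 − 4|q|²))/2). In particular the Szegő function of φ is a polynomial of degree 1. -/

import Mathlib

open MeasureTheory Complex Filter ComplexConjugate Metric

/-- The point `e^{2πit}` on the unit circle. -/
noncomputable def circlePt (t : ℝ) : ℂ := Complex.exp (((2 * Real.pi * t : ℝ) : ℂ) * Complex.I)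

/-- The inverse Szegő function `ψ(z) = exp(-(1/2)∫₀¹ ((e^{2πit}+z)/(e^{2πit}-z)) log φ(t) dt)`. -/
noncomputable def szegoPsi (φ : ℝ → ℝ) (z : ℂ) : ℂ :=
  Complex.exp (-(1/2 : ℂ) * ∫ t in (0:ℝ)..1,
    ((circlePt t + z) / (circlePt t - z)) * (Real.log (φ t) : ℂ))

/-- Fourier coefficients of the weight: `γ(k) = ∫₀¹ e^{2πikt} φ(t) dt`. -/
noncomputable def toeplitzCoeff (φ : ℝ → ℝ) (k : ℤ) : ℂ :=
  ∫ t in (0:ℝ)..1, Complex.exp (((2 * Real.pi * (k : ℝ) * t : ℝ) : ℂ) * Complex.I) * (φ t : ℂ)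

lemma circlePt_eq (t : ℝ) : circlePt t = circleMap 0 1 (2 * Real.pi * t) := by
  simp [circlePt, circleMap]

lemma norm_circlePt (t : ℝ) : ‖circlePt t‖ = 1 := by
  rw [circlePt_eq]
  simpa using abs_circleMap_zero 1 (2 * Real.pi * t)

lemma circlePt_ne_zero (t : ℝ) : circlePt t ≠ 0 := by
  intro h
  have := norm_circlePt t
  rw [h] at this
  simp at this

lemma circlePt_ne (t : ℝ) {z : ℂ} (hz : ‖z‖ < 1) : circlePt t - z ≠ 0 := by
  intro h
  rw [sub_eq_zero] at h
  rw [← h, norm_circlePt] at hz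
  exact lt_irrefl _ hz

lemma continuous_circlePt : Continuous circlePt := by
  unfold circlePt; fun_prop

lemma cauchy_key (f : ℂ → ℂ) {R : ℝ} (hR : 1 < R)
    (hf : DifferentiableOn ℂ f (ball 0 R)) {z : ℂ} (hz : ‖z‖ < 1) :
    ∫ t in (0:ℝ)..1, circlePt t / (circlePt t - z) * f (circlePt t) = f z := by
  have hd : DiffContOnCl ℂ f (ball (0:ℂ) 1) :=
    ⟨hf.mono (ball_subset_ball hR.le),
     (hf.continuousOn).mono (by
       rw [closure_ball (0:ℂ) one_ne_zero]
       exact closedBall_subset_ball hR)⟩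
  have hz' : z ∈ ball (0:ℂ) 1 := by simpa [mem_ball, dist_eq_norm] using hz
  have hC := hd.circleIntegral_sub_inv_smul hz'
  rw [circleIntegral] at hC
  simp only [deriv_circleMap, smul_eq_mul] at hC
  have h1 : ∀ θ : ℝ, circleMap 0 1 θ * I * ((circleMap 0 1 θ - z)⁻¹ * f (circleMap 0 1 θ))
      = I * (circleMap 0 1 θ / (circleMap 0 1 θ - z) * f (circleMap 0 1 θ)) := by
    intro θ; field_simp
  rw [intervalIntegral.integral_congr (g := fun θ =>
      I * (circleMap 0 1 θ / (circleMap 0 1 θ - z) * f (circleMap 0 1 θ)))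
      (fun θ _ => h1 θ), intervalIntegral.integral_const_mul] at hC
  set F : ℝ → ℂ := fun θ => circleMap 0 1 θ / (circleMap 0 1 θ - z) * f (circleMap 0 1 θ) with hF
  have hsub : ((2 * Real.pi : ℝ) • ∫ t in (0:ℝ)..1, F (2 * Real.pi * t))
      = ∫ θ in (0:ℝ)..(2*Real.pi), F θ := by
    have := intervalIntegral.smul_integral_comp_mul_left (a := (0:ℝ)) (b := 1) F (2 * Real.pi)
    simpa using this
  have hFc : (fun t : ℝ => F (2 * Real.pi * t)) =
      fun t => circlePt t / (circlePt t - z) * f (circlePt t) := by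
    funext t; rw [hF]; simp only [circlePt_eq]
  rw [← hsub, hFc] at hC
  have hI : I * ((2 * Real.pi : ℝ) • ∫ t in (0:ℝ)..1,
      circlePt t / (circlePt t - z) * f (circlePt t)) = (2 * Real.pi * I : ℂ) *
      ∫ t in (0:ℝ)..1, circlePt t / (circlePt t - z) * f (circlePt t) := by
    rw [real_smul]; push_cast; ring
  rw [hI] at hC
  have h2 : (2 * (Real.pi:ℂ) * I) ≠ 0 := by
    simp [Real.pi_ne_zero, I_ne_zero]
  exact mul_left_cancel₀ h2 hC

lemma szego_kernel_int (f : ℂ → ℂ) {R : ℝ} (hR : 1 < R)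
    (hf : DifferentiableOn ℂ f (ball 0 R)) {z : ℂ} (hz : ‖z‖ < 1) :
    ∫ t in (0:ℝ)..1, (circlePt t + z) / (circlePt t - z) * f (circlePt t)
      = 2 * f z - f 0 := by
  have h0 : (0:ℝ) < 1 := one_pos
  have hfz := cauchy_key f hR hf hz
  have hf0 := cauchy_key f hR hf (z := 0) (by simp)
  have hfc : Continuous fun t => f (circlePt t) := by
    rw [continuous_iff_continuousAt]
    intro t
    have hmem : circlePt t ∈ ball (0:ℂ) R := by
      rw [mem_ball, dist_zero_right, norm_circlePt]; exact hR
    exact ((hf.differentiableAt (isOpen_ball.mem_nhds hmem)).continuousAt).comp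
      continuous_circlePt.continuousAt
  have hint1 : IntervalIntegrable (fun t => circlePt t / (circlePt t - z) * f (circlePt t))
      volume 0 1 := by
    apply Continuous.intervalIntegrable
    exact ((continuous_circlePt.div (continuous_circlePt.sub continuous_const)
      (fun t => circlePt_ne t hz)).mul hfc)
  have hint0 : IntervalIntegrable (fun t => circlePt t / (circlePt t - 0) * f (circlePt t))
      volume 0 1 := by
    apply Continuous.intervalIntegrable
    exact ((continuous_circlePt.div (continuous_circlePt.sub continuous_const)
      (fun t => circlePt_ne t (by simp))).mul hfc)
  have hpt : ∀ t : ℝ, (circlePt t + z) / (circlePt t - z) * f (circlePt t)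
      = 2 * (circlePt t / (circlePt t - z) * f (circlePt t))
        - circlePt t / (circlePt t - 0) * f (circlePt t) := by
    intro t
    have h1 : circlePt t - z ≠ 0 := circlePt_ne t hz
    have h2 : circlePt t ≠ 0 := circlePt_ne_zero t
    field_simp
    ring
  rw [intervalIntegral.integral_congr (fun t _ => hpt t)]
  rw [intervalIntegral.integral_sub (hint1.const_mul 2) hint0,
    intervalIntegral.integral_const_mul, hfz, hf0]

lemma intervalIntegral_conj {f : ℝ → ℂ} {a b : ℝ} :
    ∫ t in a..b, conj (f t) = conj (∫ t in a..b, f t) := by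
  rw [intervalIntegral, intervalIntegral, integral_conj, integral_conj, map_sub]

lemma mem_slit {v : ℂ} (hv : ‖v‖ < 1) : 1 + v ∈ Complex.slitPlane := by
  rw [Complex.mem_slitPlane_iff]
  left
  have := Complex.abs_re_le_norm v
  rw [Complex.norm_def] at this
  have hva : ‖v‖ < 1 := hv
  simp only [Complex.add_re, Complex.one_re]
  have : |v.re| ≤ ‖v‖ := Complex.abs_re_le_norm v
  nlinarith [abs_nonneg v.re, neg_abs_le v.re]

lemma one_add_ne_zero {v : ℂ} (hv : ‖v‖ < 1) : 1 + v ≠ 0 := by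
  intro h
  have : v = -1 := by linear_combination h
  rw [this] at hv
  simp at hv

/-- for |q| < 1/2 and the weight `φ(t) = 1 + 2 Re(q e^{2πit})`, the Szegő
function is the degree-one polynomial `c₀ + (q/c₀) z` with
`c₀ = sqrt((1 + sqrt(1 − 4|q|²))/2)`. -/
theorem szego_function_tridiagonal (q : ℂ) (hq : ‖q‖ < 1/2)
    (c₀ : ℝ) (hc₀ : c₀ = Real.sqrt ((1 + Real.sqrt (1 - 4 * ‖q‖ ^ 2)) / 2)) :
    ∀ z : ℂ, ‖z‖ < 1 →
      Complex.exp ((1/2 : ℂ) * ∫ t in (0:ℝ)..1,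
          ((circlePt t + z) / (circlePt t - z)) *
            (Real.log (1 + 2 * (q * circlePt t).re) : ℂ)) =
        (c₀ : ℂ) + (q / (c₀ : ℂ)) * z := by
  intro z hz
  set s : ℝ := Real.sqrt (1 - 4 * ‖q‖ ^ 2) with hs
  have hq2 : 4 * ‖q‖ ^ 2 < 1 := by nlinarith [norm_nonneg q]
  have hs0 : 0 ≤ s := Real.sqrt_nonneg _
  have hs_sq : s ^ 2 = 1 - 4 * ‖q‖ ^ 2 := Real.sq_sqrt (by linarith)
  have hc2 : c₀ ^ 2 = (1 + s) / 2 := by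
    rw [hc₀]; exact Real.sq_sqrt (by positivity)
  have hc0pos : 0 < c₀ := by
    rw [hc₀]; apply Real.sqrt_pos.2; positivity
  have hchalf : 1/2 ≤ c₀ ^ 2 := by rw [hc2]; linarith
  have hc0ne : (c₀ : ℂ) ≠ 0 := by exact_mod_cast (ne_of_gt hc0pos)
  have hc2ne : c₀ ^ 2 ≠ 0 := by positivity
  have hsum : c₀ ^ 2 + ‖q‖ ^ 2 / c₀ ^ 2 = 1 := by
    have hdiv : ‖q‖ ^ 2 / c₀ ^ 2 = (1 - s) / 2 := by
      rw [div_eq_iff hc2ne, hc2]; nlinarith [hs_sq]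
    rw [hdiv, hc2]; ring
  have hnc : ‖((c₀:ℂ)) ^ 2‖ = c₀ ^ 2 := by
    rw [norm_pow, Complex.norm_real, Real.norm_eq_abs, abs_of_pos hc0pos]
  set a : ℂ := q / (c₀ : ℂ) ^ 2 with ha
  have hna : ‖a‖ < 1 := by
    rw [ha, norm_div, hnc, div_lt_one (by positivity)]
    linarith
  -- pointwise identity for the weight
  have hw_pos : ∀ t : ℝ, (1 : ℝ) + 2 * (q * circlePt t).re
      = c₀ ^ 2 * Complex.normSq (1 + a * circlePt t) := by
    intro t
    have hn : Complex.normSq (circlePt t) = 1 := by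
      rw [Complex.normSq_eq_norm_sq, norm_circlePt]; norm_num
    rw [Complex.normSq_add]
    have h1 : Complex.normSq (a * circlePt t) = ‖q‖^2 / c₀^4 := by
      rw [Complex.normSq_eq_norm_sq, norm_mul, norm_circlePt,
        mul_one, ha, norm_div, hnc, div_pow, ← pow_mul]
    have h2 : ((1:ℂ) * conj (a * circlePt t)).re = (a * circlePt t).re := by
      rw [one_mul, Complex.conj_re]
    have h3 : c₀^2 * (a * circlePt t).re = (q * circlePt t).re := by
      have : ((c₀:ℂ)^2 * (a * circlePt t)) = q * circlePt t := by
        rw [ha]; field_simp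
      calc c₀^2 * (a * circlePt t).re = ((c₀:ℂ)^2 * (a * circlePt t)).re := by
            rw [← Complex.ofReal_pow, Complex.re_ofReal_mul]
      _ = (q * circlePt t).re := by rw [this]
    rw [h1, h2, Complex.normSq_one]
    have hc2ne : (c₀:ℝ) ≠ 0 := ne_of_gt hc0pos
    have expand : c₀ ^ 2 * (1 + ‖q‖ ^ 2 / c₀ ^ 4 + 2 * (a * circlePt t).re)
        = c₀^2 + ‖q‖^2/c₀^2 + 2 * (c₀^2 * (a * circlePt t).re) := by
      field_simp
    rw [expand, h3, hsum]
  -- the analytic functions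
  set g : ℂ → ℂ := fun u => Complex.log (1 + a * u) with hg
  set m : ℝ := max ‖a‖ ‖z‖ with hm
  have hm0 : 0 ≤ m := le_trans (norm_nonneg a) (le_max_left _ _)
  have hm1 : m < 1 := max_lt hna hz
  set R : ℝ := 2 / (1 + m) with hR
  have hR1 : 1 < R := by
    rw [hR, lt_div_iff₀ (by linarith)]
    linarith
  have hball : ∀ u ∈ ball (0:ℂ) R, ‖a * u‖ < 1 ∧ ‖conj z * u‖ < 1 := by
    intro u hu
    rw [mem_ball, dist_eq_norm, sub_zero] at hu
    have hmR : m * R < 1 := by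
      rw [hR, ← mul_div_assoc, div_lt_one (by linarith)]
      linarith
    constructor
    · rw [norm_mul]
      calc ‖a‖ * ‖u‖ ≤ m * R :=
            mul_le_mul (le_max_left _ _) hu.le (norm_nonneg _) hm0
      _ < 1 := hmR
    · rw [norm_mul, RCLike.norm_conj]
      calc ‖z‖ * ‖u‖ ≤ m * R :=
            mul_le_mul (le_max_right _ _) hu.le (norm_nonneg _) hm0
      _ < 1 := hmR
  have hgd : DifferentiableOn ℂ g (ball 0 R) := by
    intro u hu
    have h1 : DifferentiableAt ℂ (fun u : ℂ => 1 + a * u) u := by fun_prop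
    exact ((h1.clog (mem_slit (hball u hu).1)).differentiableWithinAt)
  set H : ℂ → ℂ := fun u => (1 + conj z * u) / (1 - conj z * u) * g u with hH
  have hHd : DifferentiableOn ℂ H (ball 0 R) := by
    intro u hu
    have hden : (1 : ℂ) - conj z * u ≠ 0 := by
      have := one_add_ne_zero (v := -(conj z * u)) (by simpa using (hball u hu).2)
      simpa [sub_eq_add_neg] using this
    have hnum : DifferentiableAt ℂ (fun u : ℂ => 1 + conj z * u) u :=
      (differentiableAt_const _).add (differentiableAt_id.const_mul _)
    have hden' : DifferentiableAt ℂ (fun u : ℂ => 1 - conj z * u) u :=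
      (differentiableAt_const _).sub (differentiableAt_id.const_mul _)
    have h1 : DifferentiableAt ℂ (fun u : ℂ => (1 + conj z * u) / (1 - conj z * u)) u :=
      hnum.div hden' hden
    have h2 : DifferentiableAt ℂ (fun u : ℂ => 1 + a * u) u := by fun_prop
    exact (h1.mul (h2.clog (mem_slit (hball u hu).1))).differentiableWithinAt
  -- continuity of t ↦ g (circlePt t)
  have hball1 : ∀ t : ℝ, ‖a * circlePt t‖ < 1 := by
    intro t; rw [norm_mul, norm_circlePt, mul_one]; exact hna
  have hgc : Continuous fun t : ℝ => g (circlePt t) := by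
    rw [continuous_iff_continuousAt]
    intro t
    have h2 : ContinuousAt (fun t : ℝ => 1 + a * circlePt t) t :=
      (continuous_const.add (continuous_const.mul continuous_circlePt)).continuousAt
    show ContinuousAt (fun t : ℝ => Complex.log (1 + a * circlePt t)) t
    exact h2.clog (mem_slit (hball1 t))
  have hKc : Continuous fun t : ℝ => (circlePt t + z) / (circlePt t - z) :=
    Continuous.div (continuous_circlePt.add continuous_const)
      (continuous_circlePt.sub continuous_const) (fun t => circlePt_ne t hz)
  -- the three integrals
  have I1 : ∫ t in (0:ℝ)..1, (circlePt t + z) / (circlePt t - z)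
        * ((2 * Real.log c₀ : ℝ) : ℂ) = 2 * Real.log c₀ := by
    have := szego_kernel_int (fun _ => ((2 * Real.log c₀ : ℝ) : ℂ)) hR1
      (differentiableOn_const _) hz
    rw [this]; push_cast; ring
  have I2 : ∫ t in (0:ℝ)..1, (circlePt t + z) / (circlePt t - z) * g (circlePt t)
      = 2 * g z := by
    rw [szego_kernel_int g hR1 hgd hz]
    have : g 0 = 0 := by simp [hg]
    rw [this]; ring
  have I3 : ∫ t in (0:ℝ)..1, (circlePt t + z) / (circlePt t - z) * conj (g (circlePt t))
      = 0 := by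
    have hpt : ∀ t : ℝ, (circlePt t + z) / (circlePt t - z) * conj (g (circlePt t))
        = conj ((circlePt t + 0) / (circlePt t - 0) * H (circlePt t)) := by
      intro t
      set w := circlePt t with hwdef
      have hw0 : w ≠ 0 := circlePt_ne_zero t
      have hwz : w - z ≠ 0 := circlePt_ne t hz
      have hw1 : ‖w‖ = 1 := norm_circlePt t
      have hden : (1 : ℂ) - conj z * w ≠ 0 := by
        have h := one_add_ne_zero (v := -(conj z * w)) (by
          simp only [norm_neg, norm_mul, RCLike.norm_conj, hw1, mul_one]
          exact hz)
        simpa [sub_eq_add_neg] using h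
      have hcw : conj w = w⁻¹ := (Complex.inv_eq_conj hw1).symm
      have hKconj : conj ((w + 0) / (w - 0)) * conj ((1 + conj z * w) / (1 - conj z * w))
          = (w + z) / (w - z) := by
        simp only [map_div₀, map_add, map_sub, map_mul, map_one, map_zero, hcw,
          Complex.conj_conj, add_zero, sub_zero]
        field_simp
      have hgconj : conj (conj (g w)) = g w := Complex.conj_conj _
      have hHw : H w = (1 + conj z * w) / (1 - conj z * w) * g w := rfl
      symm
      simp only [hHw, map_mul, ← mul_assoc, hKconj]
    rw [intervalIntegral.integral_congr (fun t _ => hpt t)]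
    rw [intervalIntegral_conj]
    rw [szego_kernel_int H hR1 hHd (z := 0) (by simp)]
    have : H 0 = 0 := by simp [hH, hg]
    rw [this]
    simp
  -- split the main integral
  have hlog : ∀ t : ℝ, ((Real.log (1 + 2 * (q * circlePt t).re) : ℝ) : ℂ)
      = ((2 * Real.log c₀ : ℝ) : ℂ) + g (circlePt t) + conj (g (circlePt t)) := by
    intro t
    have hne : (1 : ℂ) + a * circlePt t ≠ 0 := one_add_ne_zero (hball1 t)
    have habs : ‖1 + a * circlePt t‖ ≠ 0 := norm_ne_zero_iff.mpr hne
    have h1 : g (circlePt t) + conj (g (circlePt t))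
        = ((2 * Real.log ‖1 + a * circlePt t‖ : ℝ) : ℂ) := by
      rw [hg, Complex.add_conj, Complex.log_re]
    rw [add_assoc, h1, ← Complex.ofReal_add, hw_pos t]
    congr 1
    rw [Real.log_mul (by positivity) (by
      rw [Complex.normSq_eq_norm_sq]; positivity)]
    rw [Complex.normSq_eq_norm_sq, Real.log_pow, Real.log_pow]
    push_cast
    ring
  have hsplit : ∫ t in (0:ℝ)..1, (circlePt t + z) / (circlePt t - z)
        * ((Real.log (1 + 2 * (q * circlePt t).re) : ℝ) : ℂ)
      = 2 * Real.log c₀ + 2 * g z := by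
    have hintA : IntervalIntegrable
        (fun t => (circlePt t + z) / (circlePt t - z) * ((2 * Real.log c₀ : ℝ) : ℂ))
        volume 0 1 := (hKc.mul continuous_const).intervalIntegrable _ _
    have hintB : IntervalIntegrable
        (fun t => (circlePt t + z) / (circlePt t - z) * g (circlePt t))
        volume 0 1 := (hKc.mul hgc).intervalIntegrable _ _
    have hintC : IntervalIntegrable
        (fun t => (circlePt t + z) / (circlePt t - z) * conj (g (circlePt t)))
        volume 0 1 :=
      (hKc.mul (Complex.continuous_conj.comp hgc)).intervalIntegrable _ _
    have hpt : ∀ t : ℝ, (circlePt t + z) / (circlePt t - z)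
          * ((Real.log (1 + 2 * (q * circlePt t).re) : ℝ) : ℂ)
        = (circlePt t + z) / (circlePt t - z) * ((2 * Real.log c₀ : ℝ) : ℂ)
          + (circlePt t + z) / (circlePt t - z) * g (circlePt t)
          + (circlePt t + z) / (circlePt t - z) * conj (g (circlePt t)) := by
      intro t
      rw [hlog t]
      ring
    rw [intervalIntegral.integral_congr (fun t _ => hpt t)]
    rw [intervalIntegral.integral_add (hintA.add hintB) hintC,
      intervalIntegral.integral_add hintA hintB, I1, I2, I3]
    push_cast
    ring
  rw [hsplit]
  have hexp : (1/2 : ℂ) * (2 * Real.log c₀ + 2 * g z)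
      = ((Real.log c₀ : ℝ) : ℂ) + g z := by push_cast; ring
  rw [hexp, Complex.exp_add]
  have h1 : Complex.exp ((Real.log c₀ : ℝ) : ℂ) = (c₀ : ℂ) := by
    rw [← Complex.ofReal_exp, Real.exp_log hc0pos]
  have h2 : Complex.exp (g z) = 1 + a * z := by
    rw [hg]
    exact Complex.exp_log (one_add_ne_zero (by
      rw [norm_mul]
      nlinarith [norm_nonneg a, norm_nonneg z]))
  rw [h1, h2, ha]
  field_simp
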